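/- Let μ : ℝ → ℝ be a differentiable function defined on all of ℝ satisfying μ'(s) = μ(s)² for every s ∈ ℝ. Then μ is identically zero. -/

import Mathlib

/-- Auxiliary: a global solution of `μ' = μ²` cannot be positive anywhere. -/
lemma riccati_not_pos (μ : ℝ → ℝ) (hdiff : ∀ s : ℝ, HasDerivAt μ ((μ s) ^ 2) s)
    (a : ℝ) (ha : 0 < μ a) : False := by
  have hmono : Monotone μ := by
    apply monotone_of_deriv_nonneg
    · exact fun s => (hdiff s).differentiableAt
    · intro s
      rw [(hdiff s).deriv]
      positivity
  have hpos : ∀ s, a ≤ s → 0 < μ s := fun s hs => lt_of_lt_of_le ha (hmono hs)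
  set b : ℝ := a + 2 / μ a with hb
  have h2pos : 0 < 2 / μ a := by positivity
  have hab : a < b := by rw [hb]; linarith
  have hw : ∀ x ∈ Set.Ioo a b, HasDerivAt (fun s => (μ s)⁻¹) (-1) x := by
    intro x hx
    have hx0 : μ x ≠ 0 := (hpos x hx.1.le).ne'
    have := (hdiff x).inv hx0
    rw [neg_div, div_self (pow_ne_zero 2 hx0)] at this
    exact this
  have hcont : ContinuousOn (fun s => (μ s)⁻¹) (Set.Icc a b) := by
    intro x hx
    exact ((hdiff x).continuousAt.inv₀ (hpos x hx.1).ne').continuousWithinAt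
  obtain ⟨c, _, hc⟩ := exists_hasDerivAt_eq_slope (fun s => (μ s)⁻¹) (fun _ => (-1 : ℝ))
    hab hcont hw
  have hba : b - a = 2 / μ a := by rw [hb]; ring
  have hμb : 0 < (μ b)⁻¹ := inv_pos.mpr (hpos b hab.le)
  have hμa : 0 < (μ a)⁻¹ := inv_pos.mpr ha
  rw [eq_div_iff (sub_ne_zero.mpr hab.ne')] at hc
  have h2 : 2 / μ a = 2 * (μ a)⁻¹ := by rw [div_eq_mul_inv]
  nlinarith [hc, hba, h2]

/-- A globally defined differentiable solution `μ : ℝ → ℝ` of the ODE `μ' = μ²`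
is identically zero. -/
theorem global_solution_of_riccati_is_zero
    (μ : ℝ → ℝ) (hdiff : ∀ s : ℝ, HasDerivAt μ ((μ s) ^ 2) s) :
    ∀ s : ℝ, μ s = 0 := by
  have hnu : ∀ s : ℝ, HasDerivAt (fun t => -μ (-t)) ((-μ (-s)) ^ 2) s := by
    intro s
    have h1 : HasDerivAt (fun t => μ (-t)) (-(μ (-s) ^ 2)) s := by
      have := (hdiff (-s)).comp s (hasDerivAt_neg s)
      simpa [mul_comm, Function.comp_def] using this
    have := h1.neg
    simpa [Pi.neg_def] using this
  intro s
  by_contra h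
  rcases lt_or_gt_of_ne h with hlt | hgt
  · exact riccati_not_pos (fun t => -μ (-t)) hnu (-s) (by simpa using hlt)
  · exact riccati_not_pos μ hdiff s hgt
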